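/- In site percolation on ℤ^d with parameter p, for any x with |x|₁ ≥ 2 (and assuming the BK inequality), P_p({0 ↔ x} ∘ {0 ↔ x}) ≤ p² ((J∗τ_p)(x))², where J(x) = 𝟙{|x|₁=1} and (J∗τ_p)(x) = ∑_y J(y)τ_p(x-y). -/

import Mathlib

open MeasureTheory

/-- A site percolation configuration on `ℤ^d`. -/
abbrev Config (d : ℕ) := (Fin d → ℤ) → Bool

/-- The ℓ¹ norm of a point of `ℤ^d`. -/
def norm1 {d : ℕ} (x : Fin d → ℤ) : ℕ := ∑ i, (x i).natAbs

/-- Nearest-neighbor adjacency on `ℤ^d`. -/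
def adj {d : ℕ} (x y : Fin d → ℤ) : Prop := norm1 (x - y) = 1

/-- `x ↔ y` in `ω`: a nearest-neighbor path with occupied interior vertices, `x ≠ y`. -/
def Connected {d : ℕ} (ω : Config d) (x y : Fin d → ℤ) : Prop :=
  x ≠ y ∧ ∃ l : List (Fin d → ℤ), List.Chain adj x (l ++ [y]) ∧ ∀ v ∈ l, ω v = true

/-- `μ` is the Bernoulli product measure with density `p`. -/
def IsBernoulli {d : ℕ} (p : ℝ) (μ : Measure (Config d)) : Prop :=
  ∀ (s : Finset (Fin d → ℤ)) (η : (Fin d → ℤ) → Bool),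
    μ {ω | ∀ v ∈ s, ω v = η v} =
      ∏ v ∈ s, (if η v then ENNReal.ofReal p else ENNReal.ofReal (1 - p))

/-- The two-point function `τ_p(x) = P_p(0 ↔ x)`. -/
noncomputable def tau {d : ℕ} (μ : Measure (Config d)) (x : Fin d → ℤ) : ℝ :=
  (μ {ω | Connected ω 0 x}).toReal

/-- `J(x) = 𝟙{|x|₁ = 1}`. -/
def Jfun {d : ℕ} (x : Fin d → ℤ) : ℝ := if norm1 x = 1 then 1 else 0

/-- An increasing event. -/
def IncreasingEvent {d : ℕ} (A : Set (Config d)) : Prop :=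
  ∀ ω ω' : Config d, (∀ v, ω v = true → ω' v = true) → ω ∈ A → ω' ∈ A

/-- Disjoint occurrence `A ∘ B`. -/
def DisjOcc {d : ℕ} (A B : Set (Config d)) : Set (Config d) :=
  {ω | ∃ K L : Set (Fin d → ℤ), Disjoint K L ∧
    (∀ ω', (∀ v ∈ K, ω' v = ω v) → ω' ∈ A) ∧
    (∀ ω', (∀ v ∈ L, ω' v = ω v) → ω' ∈ B)}

namespace DCB
open MeasurableSpace

variable {d : ℕ}

lemma norm1_neg (x : Fin d → ℤ) : norm1 (-x) = norm1 x := by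
  unfold norm1; simp

def cyl (s : Finset (Fin d → ℤ)) (η : (Fin d → ℤ) → Bool) : Set (Config d) :=
  {ω | ∀ v ∈ s, ω v = η v}

lemma measurableSet_cyl (s : Finset (Fin d → ℤ)) (η : (Fin d → ℤ) → Bool) :
    MeasurableSet (cyl s η) := by
  have h : cyl s η = ⋂ v ∈ s, (fun ω : Config d => ω v) ⁻¹' {η v} := by
    ext ω; simp [cyl]
  rw [h]
  exact MeasurableSet.biInter s.countable_toSet
    (fun v _ => (measurable_pi_apply v) (measurableSet_singleton _))

lemma measurableSet_site (y : Fin d → ℤ) :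
    MeasurableSet {ω : Config d | ω y = true} := by
  have h : {ω : Config d | ω y = true} = (fun ω : Config d => ω y) ⁻¹' {true} := by
    ext ω; simp
  rw [h]
  exact (measurable_pi_apply y) (measurableSet_singleton _)

lemma measurableSet_connected (a b : Fin d → ℤ) :
    MeasurableSet {ω : Config d | Connected ω a b} := by
  by_cases hab : a = b
  · have h : {ω : Config d | Connected ω a b} = ∅ := by
      ext ω; simp [Connected, hab]
    rw [h]; exact MeasurableSet.empty
  · have h : {ω : Config d | Connected ω a b} =
        ⋃ l : {l : List (Fin d → ℤ) // List.Chain adj a (l ++ [b])},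
          cyl (l : List (Fin d → ℤ)).toFinset (fun _ => true) := by
      ext ω
      constructor
      · rintro ⟨-, l, hch, hocc⟩
        exact Set.mem_iUnion.2 ⟨⟨l, hch⟩, by simpa [cyl] using hocc⟩
      · intro h
        obtain ⟨⟨l, hch⟩, hl⟩ := Set.mem_iUnion.1 h
        exact ⟨hab, l, hch, by simpa [cyl] using hl⟩
    rw [h]
    exact MeasurableSet.iUnion (fun l => measurableSet_cyl _ _)

def cylsIn (S : Set (Fin d → ℤ)) : Set (Set (Config d)) :=
  {t | ∃ (s : Finset (Fin d → ℤ)) (η : (Fin d → ℤ) → Bool), ↑s ⊆ S ∧ t = cyl s η}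

lemma isPiSystem_cylsIn (S : Set (Fin d → ℤ)) : IsPiSystem (cylsIn (d := d) S) := by
  rintro t₁ ⟨s₁, η₁, hs₁, rfl⟩ t₂ ⟨s₂, η₂, hs₂, rfl⟩ hne
  obtain ⟨ω₀, h₁, h₂⟩ := hne
  refine ⟨s₁ ∪ s₂, fun v => if v ∈ s₁ then η₁ v else η₂ v, ?_, ?_⟩
  · intro v hv
    rcases Finset.mem_union.1 (by exact_mod_cast hv) with h | h
    · exact hs₁ h
    · exact hs₂ h
  · ext ω
    simp only [cyl, Set.mem_inter_iff, Set.mem_setOf_eq, Finset.mem_union]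
    constructor
    · rintro ⟨k₁, k₂⟩ v hv
      rcases hv with hv | hv
      · rw [if_pos hv]; exact k₁ v hv
      · by_cases hv1 : v ∈ s₁
        · rw [if_pos hv1]; exact k₁ v hv1
        · rw [if_neg hv1]; exact k₂ v hv
    · intro k
      constructor
      · intro v hv
        have := k v (Or.inl hv); rwa [if_pos hv] at this
      · intro v hv
        have := k v (Or.inr hv)
        by_cases hv1 : v ∈ s₁
        · rw [if_pos hv1] at this
          rw [this, ← h₁ v hv1, h₂ v hv]
        · rwa [if_neg hv1] at this

lemma generateFrom_cyls :
    (inferInstance : MeasurableSpace (Config d)) = generateFrom (cylsIn (Set.univ)) := by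
  refine le_antisymm ?_ (generateFrom_le ?_)
  · have hmeas : ∀ v : Fin d → ℤ, @Measurable _ _ (generateFrom (cylsIn (d := d) Set.univ)) _
        (fun ω : Config d => ω v) := by
      intro v
      refine @measurable_to_countable' Bool (Config d) _ _ (generateFrom (cylsIn (d := d) Set.univ)) _ ?_
      intro b
      have h : (fun ω : Config d => ω v) ⁻¹' {b} = cyl {v} (fun _ => b) := by
        ext ω; simp [cyl]
      rw [h]
      exact measurableSet_generateFrom ⟨{v}, fun _ => b, by simp, rfl⟩
    exact iSup_le fun v => measurable_iff_comap_le.mp (hmeas v)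
  · rintro t ⟨s, η, -, rfl⟩
    exact measurableSet_cyl s η


lemma measure_cyl {p : ℝ} {μ : Measure (Config d)} (hμ : IsBernoulli p μ)
    (s : Finset (Fin d → ℤ)) (η : (Fin d → ℤ) → Bool) :
    μ (cyl s η) = ∏ v ∈ s, (if η v then ENNReal.ofReal p else ENNReal.ofReal (1 - p)) :=
  hμ s η

lemma measure_site {p : ℝ} {μ : Measure (Config d)} (hμ : IsBernoulli p μ) (y : Fin d → ℤ) :
    μ {ω : Config d | ω y = true} = ENNReal.ofReal p := by
  have h : {ω : Config d | ω y = true} = cyl {y} (fun _ => true) := by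
    ext ω; simp [cyl]
  rw [h, measure_cyl hμ]
  simp

lemma bernoulli_indep {p : ℝ} {μ : Measure (Config d)} [IsProbabilityMeasure μ]
    (hμ : IsBernoulli p μ) (y : Fin d → ℤ) {D : Set (Config d)}
    (hD : MeasurableSet[generateFrom (cylsIn {v | v ≠ y})] D) :
    μ ({ω | ω y = true} ∩ D) = ENNReal.ofReal p * μ D := by
  have hGle : generateFrom (cylsIn (d := d) {v | v ≠ y}) ≤ (inferInstance : MeasurableSpace (Config d)) :=
    generateFrom_le (by rintro t ⟨s, η, hs, rfl⟩; exact measurableSet_cyl s η)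
  refine MeasurableSpace.induction_on_inter
    (m := generateFrom (cylsIn {v | v ≠ y})) (C := fun D _ => μ ({ω | ω y = true} ∩ D) = ENNReal.ofReal p * μ D)
    rfl (isPiSystem_cylsIn _) ?_ ?_ ?_ ?_ D hD
  · simp
  · rintro t ⟨s, η, hs, rfl⟩
    have hys : y ∉ s := fun h => hs h rfl
    have key : {ω : Config d | ω y = true} ∩ cyl s η = cyl (insert y s) (Function.update η y true) := by
      ext ω
      simp only [cyl, Set.mem_inter_iff, Set.mem_setOf_eq, Finset.mem_insert]
      constructor
      · rintro ⟨h1, h2⟩ v hv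
        rcases hv with rfl | hv
        · rw [Function.update_self]; exact h1
        · rw [Function.update_of_ne (by rintro rfl; exact hys hv)]; exact h2 v hv
      · intro h
        constructor
        · have := h y (Or.inl rfl); rwa [Function.update_self] at this
        · intro v hv
          have := h v (Or.inr hv)
          rwa [Function.update_of_ne (by rintro rfl; exact hys hv)] at this
    rw [key, measure_cyl hμ, measure_cyl hμ, Finset.prod_insert hys, Function.update_self, if_pos rfl]
    congr 1
    refine Finset.prod_congr rfl fun v hv => ?_
    rw [Function.update_of_ne (by rintro rfl; exact hys hv)]
  · intro t ht hrec
    have htm : MeasurableSet t := hGle _ ht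
    have h1 : {ω : Config d | ω y = true} ∩ tᶜ
        = {ω : Config d | ω y = true} \ ({ω : Config d | ω y = true} ∩ t) := by
      ext ω; simp only [Set.mem_inter_iff, Set.mem_diff, Set.mem_compl_iff, Set.mem_setOf_eq]
      tauto
    rw [h1, measure_diff Set.inter_subset_left
      ((measurableSet_site y).inter htm).nullMeasurableSet (measure_ne_top μ _),
      hrec, measure_site hμ, measure_compl htm (measure_ne_top μ _), measure_univ,
      ENNReal.mul_sub (fun _ _ => ENNReal.ofReal_ne_top), mul_one]
  · intro f hdisj hmeas hrec
    have hm' : ∀ i, MeasurableSet (f i) := fun i => hGle _ (hmeas i)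
    rw [Set.inter_iUnion, measure_iUnion ?_ (fun i => (measurableSet_site y).inter (hm' i)),
      measure_iUnion hdisj hm']
    · simp_rw [hrec]
      rw [ENNReal.tsum_mul_left]
    · intro i j hij
      exact (hdisj hij).mono Set.inter_subset_right Set.inter_subset_right


lemma measurable_avoid (y a b : Fin d → ℤ) :
    MeasurableSet[generateFrom (cylsIn {v | v ≠ y})]
      {ω : Config d | ∃ l : List (Fin d → ℤ), y ∉ l ∧ List.Chain adj a (l ++ [b]) ∧ ∀ v ∈ l, ω v = true} := by
  have h : {ω : Config d | ∃ l : List (Fin d → ℤ), y ∉ l ∧ List.Chain adj a (l ++ [b]) ∧ ∀ v ∈ l, ω v = true}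
      = ⋃ l : {l : List (Fin d → ℤ) // y ∉ l ∧ List.Chain adj a (l ++ [b])},
          cyl (l : List (Fin d → ℤ)).toFinset (fun _ => true) := by
    ext ω
    constructor
    · rintro ⟨l, hy, hch, hocc⟩
      exact Set.mem_iUnion.2 ⟨⟨l, hy, hch⟩, by simpa [cyl] using hocc⟩
    · intro h
      obtain ⟨⟨l, hy, hch⟩, hl⟩ := Set.mem_iUnion.1 h
      exact ⟨l, hy, hch, by simpa [cyl] using hl⟩
  rw [h]
  refine MeasurableSet.iUnion fun l => measurableSet_generateFrom ?_
  refine ⟨(l : List (Fin d → ℤ)).toFinset, fun _ => true, ?_, rfl⟩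
  intro v hv
  have hvl : v ∈ (l : List (Fin d → ℤ)) := by
    simpa [List.mem_toFinset] using hv
  exact fun he => l.2.1 (he ▸ hvl)

lemma chain_of_middle {α : Type*} {r : α → α → Prop} :
    ∀ (l₁ : List α) (a c : α) (l₂ : List α), List.Chain r a (l₁ ++ c :: l₂) → List.Chain r c l₂ := by
  intro l₁
  induction l₁ with
  | nil => intro a c l₂ h; exact (List.chain_cons.1 h).2
  | cons e t ih =>
    intro a c l₂ h
    exact ih e c l₂ (List.chain_cons.1 h).2

lemma split_last {α : Type*} {y : α} :
    ∀ {l : List α}, y ∈ l → ∃ l₁ l₂, l = l₁ ++ y :: l₂ ∧ y ∉ l₂ := by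
  intro l
  induction l with
  | nil => intro h; simp at h
  | cons a t ih =>
    intro h
    by_cases hyt : y ∈ t
    · obtain ⟨l₁, l₂, rfl, hy2⟩ := ih hyt
      exact ⟨a :: l₁, l₂, rfl, hy2⟩
    · have hya : y = a := by
        rcases List.mem_cons.1 h with h | h
        · exact h
        · exact absurd h hyt
      exact ⟨[], t, by simp [hya], hyt⟩

lemma connected_avoid_self {ω : Config d} {y x : Fin d → ℤ} (h : Connected ω y x) :
    ∃ l : List (Fin d → ℤ), y ∉ l ∧ List.Chain adj y (l ++ [x]) ∧ ∀ v ∈ l, ω v = true := by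
  obtain ⟨hne, l, hch, hocc⟩ := h
  by_cases hyl : y ∈ l
  · obtain ⟨l₁, l₂, rfl, hy2⟩ := split_last hyl
    refine ⟨l₂, hy2, ?_, fun v hv => hocc v (by simp [hv])⟩
    refine chain_of_middle l₁ y y (l₂ ++ [x]) ?_
    simpa using hch
  · exact ⟨l, hyl, hch, hocc⟩

lemma connected_eq_avoid {y x : Fin d → ℤ} (hyx : y ≠ x) :
    {ω : Config d | Connected ω y x} =
      {ω : Config d | ∃ l : List (Fin d → ℤ), y ∉ l ∧ List.Chain adj y (l ++ [x]) ∧ ∀ v ∈ l, ω v = true} := by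
  ext ω
  constructor
  · exact fun h => connected_avoid_self h
  · rintro ⟨l, -, hch, hocc⟩
    exact ⟨hyx, l, hch, hocc⟩

lemma adj_translate {u v c : Fin d → ℤ} (h : adj u v) : adj (u + c) (v + c) := by
  unfold adj at *
  rwa [add_sub_add_right_eq_sub]

lemma connected_translate {ω : Config d} {c a b : Fin d → ℤ}
    (h : Connected (fun v => ω (v + c)) a b) : Connected ω (a + c) (b + c) := by
  obtain ⟨hne, l, hch, hocc⟩ := h
  refine ⟨fun he => hne (by simpa using he), l.map (· + c), ?_, ?_⟩
  · have he : (l.map (· + c)) ++ [b + c] = (l ++ [b]).map (· + c) := by simp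
    rw [he]
    have : List.Chain adj ((fun x => x + c) a) (List.map (fun x => x + c) (l ++ [b])) := by
      exact (List.isChain_map (R := adj) (fun x => x + c)).2
        (List.IsChain.imp (fun u v huv => adj_translate huv) hch)
    exact this
  · intro v hv
    obtain ⟨w, hw, rfl⟩ := List.mem_map.1 hv
    exact hocc w hw

lemma connected_translate_iff (ω : Config d) (c a b : Fin d → ℤ) :
    Connected (fun v => ω (v + c)) a b ↔ Connected ω (a + c) (b + c) := by
  constructor
  · exact connected_translate
  · intro h
    have h2 := connected_translate (ω := fun v => ω (v + c)) (c := -c) (a := a + c) (b := b + c) ?_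
    · simpa using h2
    · have he : (fun v => (fun w => ω (w + c)) (v + -c)) = ω := by
        funext v; simp
      rw [he]; exact h


lemma map_translate {p : ℝ} (μ : Measure (Config d)) [IsProbabilityMeasure μ]
    (hμ : IsBernoulli p μ) (c : Fin d → ℤ) :
    μ.map (fun ω : Config d => fun v => ω (v + c)) = μ := by
  have hT : Measurable (fun ω : Config d => fun v => ω (v + c)) :=
    measurable_pi_lambda _ fun v => measurable_pi_apply (v + c)
  have : IsProbabilityMeasure (μ.map (fun ω : Config d => fun v => ω (v + c))) :=
    Measure.isProbabilityMeasure_map hT.aemeasurable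
  refine MeasureTheory.ext_of_generate_finite (cylsIn Set.univ) generateFrom_cyls
    (isPiSystem_cylsIn _) ?_ ?_
  · rintro t ⟨s, η, -, rfl⟩
    rw [Measure.map_apply hT (measurableSet_cyl s η)]
    have hpre : (fun ω : Config d => fun v => ω (v + c)) ⁻¹' cyl s η
        = cyl (s.image (· + c)) (fun w => η (w - c)) := by
      ext ω
      simp only [cyl, Set.mem_preimage, Set.mem_setOf_eq, Finset.mem_image]
      constructor
      · rintro h w ⟨v, hv, rfl⟩
        simpa using h v hv
      · intro h v hv
        have := h (v + c) ⟨v, hv, rfl⟩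
        simpa using this
    rw [hpre, measure_cyl hμ, measure_cyl hμ,
      Finset.prod_image (fun a _ b _ h => by exact add_right_cancel h)]
    refine Finset.prod_congr rfl fun v hv => ?_
    simp
  · simp

lemma finite_nbrs : ({y : Fin d → ℤ | norm1 y = 1}).Finite := by
  refine Set.Finite.subset (Set.Finite.pi (fun i : Fin d => Set.finite_Icc (-1 : ℤ) 1)) ?_
  intro y hy
  have hy1 : norm1 y = 1 := hy
  simp only [Set.mem_pi, Set.mem_univ, Set.mem_Icc, forall_true_left]
  intro i
  have h1 : (y i).natAbs ≤ 1 := by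
    refine le_trans ?_ hy1.le
    exact Finset.single_le_sum (f := fun j => (y j).natAbs)
      (fun _ _ => Nat.zero_le _) (Finset.mem_univ i)
  constructor <;> omega

end DCB

/-- Assuming the BK inequality, for `|x|₁ ≥ 2` one has
`P_p({0 ↔ x} ∘ {0 ↔ x}) ≤ p² ((J ∗ τ_p)(x))²`. -/
theorem double_connection_bound (d : ℕ) (p : ℝ) (hp0 : 0 ≤ p) (hp1 : p ≤ 1)
    (μ : Measure (Config d)) [IsProbabilityMeasure μ] (hμ : IsBernoulli p μ)
    (hBK : ∀ A B : Set (Config d), IncreasingEvent A → IncreasingEvent B →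
      μ (DisjOcc A B) ≤ μ A * μ B)
    (x : Fin d → ℤ) (hx : 2 ≤ norm1 x) :
    (μ (DisjOcc {ω | Connected ω 0 x} {ω | Connected ω 0 x})).toReal ≤
      p ^ 2 * (∑' y : Fin d → ℤ, Jfun y * tau μ (x - y)) ^ 2 := by
  classical
  set A : Set (Config d) := {ω | Connected ω 0 x} with hA_def
  have hincA : IncreasingEvent A := by
    intro ω ω' h hω
    obtain ⟨hne, l, hch, hocc⟩ := hω
    exact ⟨hne, l, hch, fun v hv => h v (hocc v hv)⟩
  set F : Finset (Fin d → ℤ) := DCB.finite_nbrs.toFinset with hF_def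
  have hmemF : ∀ y : Fin d → ℤ, y ∈ F ↔ norm1 y = 1 := fun y => Set.Finite.mem_toFinset _
  have htau_nonneg : ∀ z : Fin d → ℤ, 0 ≤ tau μ z := fun z => ENNReal.toReal_nonneg
  have hsum : (∑' y : Fin d → ℤ, Jfun y * tau μ (x - y)) = ∑ y ∈ F, tau μ (x - y) := by
    have hzero : ∀ y : Fin d → ℤ, y ∉ F → Jfun y * tau μ (x - y) = 0 := by
      intro y hy
      rw [Jfun, if_neg (fun h => hy ((hmemF y).2 h)), zero_mul]
    rw [tsum_eq_sum hzero]
    refine Finset.sum_congr rfl fun y hy => ?_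
    rw [Jfun, if_pos ((hmemF y).1 hy), one_mul]
  have step : ∀ y ∈ F, μ ({ω : Config d | ω y = true} ∩ {ω : Config d | Connected ω y x})
      = ENNReal.ofReal p * ENNReal.ofReal (tau μ (x - y)) := by
    intro y hyF
    have hy1 : norm1 y = 1 := (hmemF y).1 hyF
    have hyx : y ≠ x := by rintro rfl; omega
    rw [DCB.connected_eq_avoid hyx, DCB.bernoulli_indep hμ y (DCB.measurable_avoid y y x),
      ← DCB.connected_eq_avoid hyx]
    congr 1
    have hT : Measurable (fun ω : Config d => fun v => ω (v + y)) :=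
      measurable_pi_lambda _ fun v => measurable_pi_apply (v + y)
    have hpre : (fun ω : Config d => fun v => ω (v + y)) ⁻¹' {ω : Config d | Connected ω 0 (x - y)}
        = {ω : Config d | Connected ω y x} := by
      ext ω
      simp only [Set.mem_preimage, Set.mem_setOf_eq]
      rw [DCB.connected_translate_iff, zero_add, sub_add_cancel]
    have htr : μ {ω : Config d | Connected ω y x} = μ {ω : Config d | Connected ω 0 (x - y)} := by
      conv_lhs => rw [← hpre]
      rw [← Measure.map_apply hT (DCB.measurableSet_connected 0 (x - y)),
        DCB.map_translate μ hμ y]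
    rw [htr]
    exact (ENNReal.ofReal_toReal (measure_ne_top μ _)).symm
  have hincl : A ⊆ ⋃ y ∈ F, ({ω : Config d | ω y = true} ∩ {ω : Config d | Connected ω y x}) := by
    rintro ω ⟨hne, l, hch, hocc⟩
    cases l with
    | nil =>
      exfalso
      have hadj : adj 0 x := (List.chain_cons.1 hch).1
      have h2 : norm1 (0 - x) = 1 := hadj
      rw [zero_sub, DCB.norm1_neg] at h2
      omega
    | cons y l' =>
      have hch2 : adj 0 y ∧ List.Chain adj y (l' ++ [x]) := List.chain_cons.1 hch
      have hy1 : norm1 y = 1 := by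
        have h2 : norm1 (0 - y) = 1 := hch2.1
        rwa [zero_sub, DCB.norm1_neg] at h2
      have hyx : y ≠ x := by rintro rfl; omega
      refine Set.mem_biUnion ((hmemF y).2 hy1) ?_
      exact ⟨hocc y List.mem_cons_self, hyx, l', hch2.2,
        fun v hv => hocc v (List.mem_cons_of_mem y hv)⟩
  have hTAU : μ A ≤ ENNReal.ofReal (p * ∑ y ∈ F, tau μ (x - y)) := by
    calc μ A ≤ μ (⋃ y ∈ F, ({ω : Config d | ω y = true} ∩ {ω : Config d | Connected ω y x})) :=
        measure_mono hincl
      _ ≤ ∑ y ∈ F, μ ({ω : Config d | ω y = true} ∩ {ω : Config d | Connected ω y x}) :=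
        measure_biUnion_finset_le F _
      _ = ∑ y ∈ F, ENNReal.ofReal p * ENNReal.ofReal (tau μ (x - y)) :=
        Finset.sum_congr rfl step
      _ = ENNReal.ofReal p * ∑ y ∈ F, ENNReal.ofReal (tau μ (x - y)) := by rw [Finset.mul_sum]
      _ = ENNReal.ofReal (p * ∑ y ∈ F, tau μ (x - y)) := by
        rw [← ENNReal.ofReal_sum_of_nonneg (fun y _ => htau_nonneg _), ← ENNReal.ofReal_mul hp0]
  have hBK' := hBK A A hincA hincA
  have hfin : μ A * μ A ≠ ⊤ := ENNReal.mul_ne_top (measure_ne_top μ A) (measure_ne_top μ A)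
  have h1 : (μ (DisjOcc A A)).toReal ≤ ((μ A) * (μ A)).toReal := ENNReal.toReal_mono hfin hBK'
  have hS0 : 0 ≤ p * ∑ y ∈ F, tau μ (x - y) :=
    mul_nonneg hp0 (Finset.sum_nonneg fun y _ => htau_nonneg _)
  have h2 : (μ A).toReal ≤ p * ∑ y ∈ F, tau μ (x - y) := by
    have h3 := ENNReal.toReal_mono ENNReal.ofReal_ne_top hTAU
    rwa [ENNReal.toReal_ofReal hS0] at h3
  calc (μ (DisjOcc A A)).toReal ≤ ((μ A) * (μ A)).toReal := h1
    _ = (μ A).toReal * (μ A).toReal := ENNReal.toReal_mul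
    _ ≤ (p * ∑ y ∈ F, tau μ (x - y)) * (p * ∑ y ∈ F, tau μ (x - y)) :=
      mul_le_mul h2 h2 ENNReal.toReal_nonneg hS0
    _ = p ^ 2 * (∑ y ∈ F, tau μ (x - y)) ^ 2 := by ring
    _ = p ^ 2 * (∑' y : Fin d → ℤ, Jfun y * tau μ (x - y)) ^ 2 := by rw [hsum]
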